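/- Let n ≥ 1 and let A be a real n×n matrix satisfying the cyclic non-increasing condition such that Ae > 0 (all row sums strictly positive). Then (i) every vector z ∈ ℝⁿ with Az = 0 satisfies eᵀz = 0, and (ii) the system Aᵀx = e has a solution x with x ≥ 0 componentwise. -/

import Mathlib

open Matrix BigOperators Finset
open Fin.NatCast

/-- The cyclic non-increasing condition: each row of `A` weakly decreases
cyclically starting from the diagonal, i.e. `a_{i[j-1]} ≥ a_{ij}` for all
`j ≠ i` (indices in `Fin n`, arithmetic mod `n`). -/
def CyclicNonIncr {n : ℕ} [NeZero n] (A : Matrix (Fin n) (Fin n) ℝ) : Prop :=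
  ∀ i j : Fin n, j ≠ i → A i (j - 1) ≥ A i j

/-- The directed graph `𝒢(A)` has an edge from `i` to `j` iff `a_{i[j-1]} > a_{ij}`. -/
def GraphEdge {n : ℕ} [NeZero n] (A : Matrix (Fin n) (Fin n) ℝ) (i j : Fin n) : Prop :=
  A i (j - 1) > A i j

/-- `i` and `j` are strongly connected in `𝒢(A)`: there are directed paths
(possibly of length 0) from `i` to `j` and from `j` to `i`. -/
def Conn {n : ℕ} [NeZero n] (A : Matrix (Fin n) (Fin n) ℝ) (i j : Fin n) : Prop :=
  Relation.ReflTransGen (GraphEdge A) i j ∧ Relation.ReflTransGen (GraphEdge A) j i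

/-- `C` is a strongly connected component of `𝒢(A)`: an equivalence class of
the strong-connectivity relation. -/
def IsSCC {n : ℕ} [NeZero n] (A : Matrix (Fin n) (Fin n) ℝ) (C : Set (Fin n)) : Prop :=
  ∃ i, C = {j | Conn A i j}

/-- `C` is a closed SCC of `𝒢(A)`: an SCC with no edge leaving it. -/
def IsClosedSCC {n : ℕ} [NeZero n] (A : Matrix (Fin n) (Fin n) ℝ) (C : Set (Fin n)) : Prop :=
  IsSCC A C ∧ ∀ i ∈ C, ∀ j, GraphEdge A i j → j ∈ C

/-- `C` is an open SCC of `𝒢(A)`: an SCC with some edge leaving it. -/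
def IsOpenSCC {n : ℕ} [NeZero n] (A : Matrix (Fin n) (Fin n) ℝ) (C : Set (Fin n)) : Prop :=
  IsSCC A C ∧ ¬ (∀ i ∈ C, ∀ j, GraphEdge A i j → j ∈ C)



lemma abel_le (n : ℕ) (b c : ℕ → ℝ) (hb : ∀ k, k + 1 < n → b (k + 1) ≤ b k)
    (hS : ∀ k < n, ∑ m ∈ Finset.range (k + 1), c m ≤ 0)
    (hS0 : ∑ m ∈ Finset.range n, c m = 0) :
    ∑ m ∈ Finset.range n, b m * c m ≤ 0 := by
  have h := Finset.sum_range_by_parts b c n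
  simp only [smul_eq_mul] at h
  rw [h, hS0, mul_zero, zero_sub, neg_nonpos]
  apply Finset.sum_nonneg
  intro i hi
  rw [Finset.mem_range] at hi
  have h1 : b (i + 1) - b i ≤ 0 := by
    have := hb i (by omega); linarith
  have h2 : ∑ j ∈ Finset.range (i + 1), c j ≤ 0 := hS i (by omega)
  nlinarith [h1, h2]

lemma core {n : ℕ} [NeZero n] (A : Matrix (Fin n) (Fin n) ℝ) (hA : CyclicNonIncr A)
    (hrow : ∀ i, 0 < A.mulVec (fun _ => (1:ℝ)) i) (z : Fin n → ℝ)
    (hz : ∀ i, 0 ≤ A.mulVec z i) : 0 ≤ ∑ i, z i := by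
  by_contra hneg
  push_neg at hneg
  have hn : 0 < n := Nat.pos_of_ne_zero (NeZero.ne n)
  set s : ℝ := (∑ i, z i) / n with hs
  have hs0 : s < 0 := div_neg_of_neg_of_pos hneg (by positivity)
  set w : Fin n → ℝ := fun j => z j - s with hw
  have hwsum : ∑ i, w i = 0 := by
    simp only [hw, Finset.sum_sub_distrib, Finset.sum_const, Finset.card_univ,
      Fintype.card_fin, nsmul_eq_mul, hs]
    field_simp
    ring
  have hAw : ∀ i, 0 < A.mulVec w i := by
    intro i
    have heq : A.mulVec w i = A.mulVec z i - s * A.mulVec (fun _ => 1) i := by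
      simp only [Matrix.mulVec, dotProduct, hw, mul_sub, Finset.sum_sub_distrib,
        Finset.mul_sum, mul_one]
      congr 1
      exact Finset.sum_congr rfl fun x _ => by ring
    rw [heq]
    nlinarith [hz i, hrow i]
  -- prefix sums
  set f : ℕ → ℝ := fun m => w (↑m) with hf
  set F : ℕ → ℝ := fun k => ∑ m ∈ Finset.range k, f m with hF
  have hwin : ∀ a : ℕ, ∑ m ∈ Finset.range n, f (a + m) = 0 := by
    intro a
    have h1 : ∀ m : ℕ, f (a + m) = w ((a : Fin n) + (m : Fin n)) := by
      intro m; simp [hf, Nat.cast_add]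
    simp only [h1]
    have h2 : ∑ m ∈ Finset.range n, w ((a : Fin n) + (m : Fin n))
        = ∑ j : Fin n, w ((a : Fin n) + j) := by
      rw [← Fin.sum_univ_eq_sum_range (fun m => w ((a : Fin n) + (m : Fin n))) n]
      exact Finset.sum_congr rfl (fun j _ => by rw [Fin.cast_val_eq_self])
    rw [h2, ← hwsum]
    exact Fintype.sum_equiv (Equiv.addLeft (a : Fin n)) _ _ (fun j => rfl)
  have hFadd : ∀ a k : ℕ, F (a + k) = F a + ∑ m ∈ Finset.range k, f (a + m) := by
    intro a k
    induction k with
    | zero => simp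
    | succ k ih =>
      have h1 : F (a + (k + 1)) = F (a + k) + f (a + k) := by
        show (∑ m ∈ Finset.range ((a + k) + 1), f m) = _
        rw [Finset.sum_range_succ]
      rw [h1, ih, Finset.sum_range_succ]; ring
  have hFper : ∀ a, F (a + n) = F a := fun a => by rw [hFadd, hwin, add_zero]
  have hFn : F n = 0 := by
    have := hFper 0
    rw [Nat.zero_add] at this
    simpa [hF] using this
  obtain ⟨j0, hj0mem, hj0max⟩ :=
    Finset.exists_max_image (Finset.range n) (fun j => F (j + 1)) ⟨0, Finset.mem_range.2 hn⟩
  have hmax : ∀ r ≤ n, F r ≤ F (j0 + 1) := by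
    intro r hr
    rcases Nat.eq_zero_or_pos r with h0 | hpos
    · subst h0
      have : F n ≤ F (j0 + 1) := by
        have := hj0max (n - 1) (Finset.mem_range.2 (by omega))
        simpa [Nat.sub_add_cancel hn] using this
      simp only [hF, Finset.range_zero, Finset.sum_empty]
      rw [hFn] at this; exact this
    · have := hj0max (r - 1) (Finset.mem_range.2 (by omega))
      simpa [Nat.sub_add_cancel hpos] using this
  set i : Fin n := ↑(j0 + 1) with hi
  set bb : ℕ → ℝ := fun k => A i (i + ↑k) with hbb
  set cc : ℕ → ℝ := fun k => w (i + ↑k) with hcc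
  have hcF : ∀ k, ∑ m ∈ Finset.range k, cc m = F (j0 + 1 + k) - F (j0 + 1) := by
    intro k
    have h1 : ∀ m, cc m = f (j0 + 1 + m) := by
      intro m; simp [hcc, hf, hi, Nat.cast_add]
    simp only [h1]
    rw [hFadd (j0 + 1) k]; ring
  have hS : ∀ k < n, ∑ m ∈ Finset.range (k + 1), cc m ≤ 0 := by
    intro k hk
    rw [hcF]
    have hmem : j0 < n := Finset.mem_range.1 hj0mem
    have : F (j0 + 1 + (k + 1)) ≤ F (j0 + 1) := by
      rcases le_or_gt (j0 + 1 + (k + 1)) n with h | h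
      · exact hmax _ h
      · have heq : F (j0 + 1 + (k + 1)) = F (j0 + 1 + (k + 1) - n) := by
          have h2 : j0 + 1 + (k + 1) = (j0 + 1 + (k + 1) - n) + n := by omega
          have h3 := hFper (j0 + 1 + (k + 1) - n)
          rw [← h2] at h3
          exact h3
        rw [heq]; exact hmax _ (by omega)
    linarith
  have hS0 : ∑ m ∈ Finset.range n, cc m = 0 := by
    rw [hcF, hFadd (j0 + 1) n, hwin, add_zero, sub_self]
  have hbmono : ∀ k, k + 1 < n → bb (k + 1) ≤ bb k := by
    intro k hk
    have hne : ((k + 1 : ℕ) : Fin n) ≠ 0 := by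
      intro h
      have : ((k + 1 : ℕ) : Fin n).val = 0 := by rw [h]; rfl
      rw [Fin.val_natCast, Nat.mod_eq_of_lt hk] at this
      omega
    have hji : i + ((k + 1 : ℕ) : Fin n) ≠ i := by
      intro h
      exact hne (by rwa [add_eq_left] at h)
    have := hA i (i + ((k + 1 : ℕ) : Fin n)) hji
    have hsub : i + ((k + 1 : ℕ) : Fin n) - 1 = i + (k : Fin n) := by
      have : ((k + 1 : ℕ) : Fin n) = (k : Fin n) + 1 := by push_cast; ring
      rw [this, ← add_assoc, add_sub_cancel_right]
    rw [hsub] at this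
    exact this
  have habel := abel_le n bb cc hbmono hS hS0
  have hfin : ∑ m ∈ Finset.range n, bb m * cc m = A.mulVec w i := by
    have h2 : ∑ m ∈ Finset.range n, bb m * cc m = ∑ j : Fin n, A i (i + j) * w (i + j) := by
      rw [← Fin.sum_univ_eq_sum_range (fun m => bb m * cc m) n]
      exact Finset.sum_congr rfl (fun j _ => by simp [hbb, hcc, Fin.cast_val_eq_self])
    rw [h2, Matrix.mulVec, dotProduct]
    exact Fintype.sum_equiv (Equiv.addLeft i) (fun j => A i (i + j) * w (i + j))
      (fun j => A i j * w j) (fun j => rfl)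
  rw [hfin] at habel
  exact absurd (hAw i) (not_lt.2 habel)


def coneOf {d m : ℕ} (v : Fin m → EuclideanSpace ℝ (Fin d)) (s : Finset (Fin m)) :
    Set (EuclideanSpace ℝ (Fin d)) :=
  {y | ∃ c : Fin m → ℝ, (∀ i, 0 ≤ c i) ∧ y = ∑ i ∈ s, c i • v i}

lemma coneOf_mono {d m : ℕ} (v : Fin m → EuclideanSpace ℝ (Fin d)) {s' s : Finset (Fin m)}
    (h : s' ⊆ s) : coneOf v s' ⊆ coneOf v s := by
  rintro y ⟨c, hc, rfl⟩
  classical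
  refine ⟨fun i => if i ∈ s' then c i else 0, fun i => by
    by_cases hi : i ∈ s' <;> simp [hi, hc i], ?_⟩
  rw [← Finset.sum_subset h (fun x _ hx => by simp [hx])]
  exact Finset.sum_congr rfl fun x hx => by simp [hx]

lemma coneOf_subset_iUnion {d m : ℕ} (v : Fin m → EuclideanSpace ℝ (Fin d))
    (s : Finset (Fin m)) (g : Fin m → ℝ)
    (hg0 : ∀ i ∉ s, g i = 0) (hgsum : ∑ i ∈ s, g i • v i = 0)
    (i0 : Fin m) (hi0 : i0 ∈ s) (hgi0 : 0 < g i0) :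
    coneOf v s ⊆ ⋃ i ∈ s.filter (fun i => 0 < g i), coneOf v (s.erase i) := by
  classical
  rintro y ⟨c, hc, rfl⟩
  set T := s.filter (fun i => 0 < g i) with hT
  have hTne : T.Nonempty := ⟨i0, Finset.mem_filter.2 ⟨hi0, hgi0⟩⟩
  obtain ⟨i1, hi1T, hmin⟩ := T.exists_min_image (fun i => c i / g i) hTne
  have hgi1 : 0 < g i1 := (Finset.mem_filter.1 hi1T).2
  set t := c i1 / g i1 with ht
  have ht0 : 0 ≤ t := div_nonneg (hc i1) hgi1.le
  set c' : Fin m → ℝ := fun i => c i - t * g i with hc'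
  have hc'0 : ∀ i, 0 ≤ c' i := by
    intro i
    by_cases hiT : i ∈ T
    · have hgi : 0 < g i := (Finset.mem_filter.1 hiT).2
      have := hmin i hiT
      have := (div_le_div_iff₀ hgi1 hgi).1 this
      simp only [hc']
      rw [ht, sub_nonneg, div_mul_eq_mul_div, div_le_iff₀ hgi1]
      nlinarith
    · have hgle : g i ≤ 0 := by
        by_cases his : i ∈ s
        · by_contra hpos
          exact hiT (Finset.mem_filter.2 ⟨his, by linarith⟩)
        · rw [hg0 i his]
      simp only [hc']
      nlinarith [hc i]
  have hc'i1 : c' i1 = 0 := by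
    simp only [hc', ht]
    field_simp
    ring
  have hsum' : ∑ i ∈ s, c' i • v i = ∑ i ∈ s, c i • v i := by
    simp only [hc', sub_smul, Finset.sum_sub_distrib]
    have : ∑ i ∈ s, (t * g i) • v i = t • ∑ i ∈ s, g i • v i := by
      rw [Finset.smul_sum]
      exact Finset.sum_congr rfl fun i _ => by rw [smul_smul]
    rw [this, hgsum, smul_zero, sub_zero]
  refine Set.mem_biUnion hi1T ⟨c', hc'0, ?_⟩
  rw [Finset.sum_erase _ (by rw [hc'i1, zero_smul]), hsum']

lemma coneOf_isClosed {d m : ℕ} (v : Fin m → EuclideanSpace ℝ (Fin d)) (s : Finset (Fin m)) :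
    IsClosed (coneOf v s) := by
  classical
  induction s using Finset.strongInduction with
  | _ s ih =>
  by_cases hli : LinearIndependent ℝ (fun i : s => v i)
  · -- linearly independent: closed embedding of the orthant
    set L : (s → ℝ) →ₗ[ℝ] EuclideanSpace ℝ (Fin d) :=
      Fintype.linearCombination ℝ (fun i : s => v i) with hL
    have hLapp : ∀ c : s → ℝ, L c = ∑ i : s, c i • v i := fun c => rfl
    have hker : LinearMap.ker L = ⊥ := by
      rw [LinearMap.ker_eq_bot']
      intro c hcL
      funext i
      exact Fintype.linearIndependent_iff.1 hli c (by rw [← hLapp]; exact hcL) i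
    have hO : IsClosed {c : s → ℝ | ∀ i, 0 ≤ c i} := by
      have : {c : s → ℝ | ∀ i, 0 ≤ c i} = ⋂ i, {c | 0 ≤ c i} := by
        ext c; simp [Set.mem_iInter]
      rw [this]
      exact isClosed_iInter fun i => isClosed_le continuous_const (continuous_apply i)
    have himg : coneOf v s = L '' {c : s → ℝ | ∀ i, 0 ≤ c i} := by
      ext y
      constructor
      · rintro ⟨c, hc, rfl⟩
        refine ⟨fun i => c i, fun i => hc i, ?_⟩
        rw [hLapp, Finset.sum_coe_sort s (fun i => c i • v i)]
      · rintro ⟨c, hc, rfl⟩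
        refine ⟨fun i => if h : i ∈ s then c ⟨i, h⟩ else 0, fun i => by
          by_cases hi : i ∈ s <;> simp [hi, hc _], ?_⟩
        rw [hLapp, ← Finset.sum_coe_sort s]
        exact Finset.sum_congr rfl fun i _ => by simp [i.2]
    rw [himg]
    exact (LinearMap.isClosedEmbedding_of_injective hker).isClosedMap _ hO
  · -- dependent: reduce to smaller cones
    obtain ⟨g, hgsum, i1, hgi1⟩ := Fintype.not_linearIndependent_iff.1 hli
    have key : ∃ G : Fin m → ℝ, (∀ i ∉ s, G i = 0) ∧ (∑ i ∈ s, G i • v i = 0) ∧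
        ∃ i0 ∈ s, 0 < G i0 := by
      set gg : Fin m → ℝ := fun i => if h : i ∈ s then g ⟨i, h⟩ else 0 with hgg
      have hggsum : ∑ i ∈ s, gg i • v i = 0 := by
        rw [← Finset.sum_coe_sort s, ← hgsum]
        exact Finset.sum_congr rfl fun i _ => by simp [hgg, dif_pos i.2]
      rcases lt_or_gt_of_ne hgi1 with hneg | hpos
      · refine ⟨-gg, fun i his => by simp [hgg, dif_neg his], ?_, ↑i1, i1.2, ?_⟩
        · simp only [Pi.neg_apply, neg_smul, Finset.sum_neg_distrib, hggsum, neg_zero]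
        · simp only [Pi.neg_apply, hgg, dif_pos i1.2, Fin.eta]
          linarith
      · exact ⟨gg, fun i his => by simp [hgg, dif_neg his], hggsum, ↑i1,
          i1.2, by simp only [hgg, dif_pos i1.2, Fin.eta]; exact hpos⟩
    obtain ⟨G, hG0, hGsum, i0, hi0s, hGi0⟩ := key
    have hunion : coneOf v s = ⋃ i ∈ s.filter (fun i => 0 < G i), coneOf v (s.erase i) := by
      apply subset_antisymm
      · exact coneOf_subset_iUnion v s G hG0 hGsum i0 hi0s hGi0
      · exact Set.iUnion₂_subset fun i _ => coneOf_mono v (Finset.erase_subset _ _)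
    rw [hunion]
    exact Set.Finite.isClosed_biUnion (Finset.finite_toSet _) fun i hi =>
      ih _ (Finset.erase_ssubset (Finset.mem_of_mem_filter i (by exact_mod_cast hi)))

theorem stmt_5 (n : ℕ) [NeZero n] (hn : 1 ≤ n) (A : Matrix (Fin n) (Fin n) ℝ)
    (hA : CyclicNonIncr A)
    (hrow : ∀ i, 0 < A.mulVec (fun _ => (1 : ℝ)) i) :
    (∀ z : Fin n → ℝ, A.mulVec z = 0 → ∑ i, z i = 0) ∧
    ∃ x : Fin n → ℝ, 0 ≤ x ∧ Aᵀ.mulVec x = fun _ => (1 : ℝ) := by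
  classical
  constructor
  · intro z hz
    have h1 : 0 ≤ ∑ i, z i :=
      core A hA hrow z (fun i => by rw [hz]; rfl)
    have h2 : 0 ≤ ∑ i, (-z) i := by
      refine core A hA hrow (-z) (fun i => ?_)
      rw [Matrix.mulVec_neg, hz]
      simp
    simp only [Pi.neg_apply, Finset.sum_neg_distrib] at h2
    linarith
  · -- part (ii)
    set r : Fin n → EuclideanSpace ℝ (Fin n) :=
      fun i => (WithLp.equiv 2 (Fin n → ℝ)).symm (A i) with hr
    set C : Set (EuclideanSpace ℝ (Fin n)) := coneOf r Finset.univ with hC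
    have hrmem : ∀ i, r i ∈ C := by
      intro i
      refine ⟨fun k => if k = i then 1 else 0, fun k => by dsimp only; split <;> norm_num, ?_⟩
      have hterm : ∀ k, (fun k => if k = i then (1:ℝ) else 0) k • r k
          = if k = i then r k else 0 := by
        intro k; dsimp only; split <;> simp
      rw [Finset.sum_congr rfl (fun k _ => hterm k)]
      simp
    have hCclosed : IsClosed C := coneOf_isClosed r Finset.univ
    set K : ConvexCone ℝ (EuclideanSpace ℝ (Fin n)) :=
      { carrier := C
        smul_mem' := by
          rintro t ht y ⟨c, hc, rfl⟩
          exact ⟨fun i => t * c i, fun i => mul_nonneg ht.le (hc i), by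
            rw [Finset.smul_sum]
            exact Finset.sum_congr rfl fun i _ => by
              dsimp only; exact smul_smul t (c i) (r i)⟩
        add_mem' := by
          rintro y ⟨c, hc, rfl⟩ y' ⟨c', hc', rfl⟩
          exact ⟨fun i => c i + c' i, fun i => add_nonneg (hc i) (hc' i), by
            rw [← Finset.sum_add_distrib]
            exact Finset.sum_congr rfl fun i _ => by
              dsimp only; exact (add_smul (c i) (c' i) (r i)).symm⟩ } with hK
    set eV : EuclideanSpace ℝ (Fin n) :=
      (WithLp.equiv 2 (Fin n → ℝ)).symm (fun _ => (1:ℝ)) with heV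
    have heVmem : eV ∈ C := by
      by_contra hnot
      obtain ⟨y, hy1, hy2⟩ :=
        ProperCone.hyperplane_separation' (E := EuclideanSpace ℝ (Fin n))
          { carrier := C
            add_mem' := fun hx hy => K.add_mem' hx hy
            zero_mem' := ⟨fun _ => 0, fun _ => le_rfl, by simp⟩
            smul_mem' := fun t x hx => by
              rcases hx with ⟨d, hd, rfl⟩
              exact ⟨fun i => t * d i, fun i => mul_nonneg t.2 (hd i), by
                rw [Finset.smul_sum]
                exact Finset.sum_congr rfl fun i _ => by dsimp only; exact smul_smul (t : ℝ) (d i) (r i)⟩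
            isClosed' := hCclosed } hnot
      -- y gives a vector z with A z ≥ 0 but ∑ z < 0
      have hz : ∀ i, 0 ≤ A.mulVec (fun j => y j) i := by
        intro i
        have := hy1 (r i) (hrmem i)
        rw [PiLp.inner_apply] at this
        simpa [hr, Matrix.mulVec, dotProduct, RCLike.inner_apply, starRingEnd_apply, mul_comm] using this
      have hcore := core A hA hrow (fun j => y j) hz
      rw [PiLp.inner_apply] at hy2
      simp only [heV, RCLike.inner_apply, starRingEnd_apply, star_trivial,
        WithLp.equiv_symm_apply, WithLp.ofLp_toLp, mul_one] at hy2
      exact absurd hcore (not_le.2 hy2)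
    obtain ⟨c, hc, hce⟩ := heVmem
    refine ⟨c, fun i => hc i, ?_⟩
    funext j
    have happ := congrArg (WithLp.equiv 2 (Fin n → ℝ)) hce
    have hlin := congrArg (fun (u : EuclideanSpace ℝ (Fin n)) =>
      (WithLp.linearEquiv 2 ℝ (Fin n → ℝ)) u) hce
    simp only [map_sum, _root_.map_smul] at hlin
    have hj := congrFun hlin j
    simp only [WithLp.linearEquiv_apply, Equiv.apply_symm_apply, WithLp.ofLp_smul, WithLp.equiv_symm_apply, WithLp.ofLp_toLp,
      heV, hr, Finset.sum_apply, Pi.smul_apply, smul_eq_mul] at hj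
    have hconv : ∑ i, Aᵀ j i * c i = ∑ i, c i * A i j :=
      Finset.sum_congr rfl fun i _ => by rw [Matrix.transpose_apply]; ring
    rw [Matrix.mulVec, dotProduct, hconv]
    exact hj.symm
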